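/- Let n ≥ 1 and suppose ξ ∈ ℝⁿ with |ξ| ≤ 1/2. Then there exists a constant C > 0 such that for all t ≥ 0, the Hessian in ξ of the function e^{-t|ξ|²} - e^{-t}|ξ|² satisfies |∇²_ξ(e^{-t|ξ|²} - e^{-t}|ξ|²)| ≤ C e^{-(1+t)|ξ|²} (1 + t + t²|ξ|²). -/

import Mathlib

open Real MeasureTheory

set_option maxHeartbeats 16000000 in
lemma stmt5_aux {E : Type*} [NormedAddCommGroup E] [InnerProductSpace ℝ E]
    (ξ : E) (hξ : ‖ξ‖ ≤ 1 / 2) (t : ℝ) (ht : 0 ≤ t) :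
    ‖iteratedFDeriv ℝ 2 (fun η : E =>
        Real.exp (-t * ‖η‖ ^ 2) - Real.exp (-t) * ‖η‖ ^ 2) ξ‖
      ≤ 8 * Real.exp (-(1 + t) * ‖ξ‖ ^ 2) * (1 + t + t ^ 2 * ‖ξ‖ ^ 2) := by
  set f : E → ℝ := fun η => Real.exp (-t * ‖η‖ ^ 2) - Real.exp (-t) * ‖η‖ ^ 2 with hf
  set L : E →L[ℝ] E →L[ℝ] ℝ := innerSL ℝ with hL
  set c : E → ℝ := fun η => -2 * t * Real.exp (-t * ‖η‖ ^ 2) - 2 * Real.exp (-t) with hc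
  set F : E → (E →L[ℝ] ℝ) := fun η => c η • L η with hF
  -- first derivative
  have step1 : ∀ η : E, HasFDerivAt f (F η) η := by
    intro η
    have hq : HasFDerivAt (fun η : E => ‖η‖ ^ 2) ((2:ℕ) • L η) η :=
      (hasStrictFDerivAt_norm_sq η).hasFDerivAt
    have h1 : HasFDerivAt (fun η : E => -t * ‖η‖ ^ 2) ((-t) • ((2:ℕ) • L η)) η :=
      hq.const_mul (-t)
    have h2 : HasFDerivAt (fun η : E => Real.exp (-t * ‖η‖ ^ 2))
        (Real.exp (-t * ‖η‖ ^ 2) • ((-t) • ((2:ℕ) • L η))) η := h1.exp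
    have h3 : HasFDerivAt (fun η : E => Real.exp (-t) * ‖η‖ ^ 2)
        (Real.exp (-t) • ((2:ℕ) • L η)) η := hq.const_mul _
    have := h2.sub h3
    convert this using 1
    case e'_8 => rfl
    case e'_9 => rfl
    case e'_11 => rfl
    ext v
    simp [hF, hc, hL, smul_smul]
    ring
  have hdiff : Differentiable ℝ f := fun η => (step1 η).differentiableAt
  have step2 : fderiv ℝ f = F := funext fun η => (step1 η).fderiv
  -- second derivative
  set c' : E →L[ℝ] ℝ := (4 * t ^ 2 * Real.exp (-t * ‖ξ‖ ^ 2)) • L ξ with hc'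
  have hcd : HasFDerivAt c c' ξ := by
    have hq : HasFDerivAt (fun η : E => ‖η‖ ^ 2) ((2:ℕ) • L ξ) ξ :=
      (hasStrictFDerivAt_norm_sq ξ).hasFDerivAt
    have h2 : HasFDerivAt (fun η : E => Real.exp (-t * ‖η‖ ^ 2))
        (Real.exp (-t * ‖ξ‖ ^ 2) • ((-t) • ((2:ℕ) • L ξ))) ξ := (hq.const_mul (-t)).exp
    have := (h2.const_mul (-2 * t)).sub_const (2 * Real.exp (-t))
    convert this using 1
    case e'_8 => rfl
    case e'_9 => rfl
    ext v
    simp [hc', hL, smul_smul]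
    ring
  have hLd : HasFDerivAt (fun η : E => L η) L ξ := L.hasFDerivAt
  have step3 : HasFDerivAt F (c ξ • L + c'.smulRight (L ξ)) ξ := hcd.smul hLd
  -- identify the iterated derivative
  have hnorm : ‖iteratedFDeriv ℝ 2 f ξ‖ = ‖c ξ • L + c'.smulRight (L ξ)‖ := by
    have e1 : ‖iteratedFDeriv ℝ 2 f ξ‖ = ‖iteratedFDeriv ℝ 1 (fderiv ℝ f) ξ‖ :=
      (norm_iteratedFDeriv_fderiv (n := 1)).symm
    have e2 : ‖iteratedFDeriv ℝ 1 (fderiv ℝ f) ξ‖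
        = ‖iteratedFDeriv ℝ 0 (fderiv ℝ (fderiv ℝ f)) ξ‖ :=
      (norm_iteratedFDeriv_fderiv (n := 0)).symm
    rw [e1, e2, norm_iteratedFDeriv_zero, step2, step3.fderiv]
  rw [hnorm]
  -- norm bounds
  have hLnorm : ‖L‖ ≤ 1 := by
    refine ContinuousLinearMap.opNorm_le_bound _ zero_le_one fun η => ?_
    rw [one_mul, hL]
    exact le_of_eq (innerSL_apply_norm ℝ η)
  have hLξ : ‖L ξ‖ = ‖ξ‖ := by rw [hL]; exact innerSL_apply_norm ℝ ξ
  have hexp_pos : (0:ℝ) < Real.exp (-t * ‖ξ‖ ^ 2) := Real.exp_pos _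
  have hq0 : (0:ℝ) ≤ ‖ξ‖ ^ 2 := sq_nonneg _
  have hbound : ‖c ξ • L + c'.smulRight (L ξ)‖ ≤ 2 * t * Real.exp (-t * ‖ξ‖ ^ 2) + 2 * Real.exp (-t)
      + 4 * t ^ 2 * Real.exp (-t * ‖ξ‖ ^ 2) * ‖ξ‖ ^ 2 := by
    have hcabs : ‖c ξ‖ ≤ 2 * t * Real.exp (-t * ‖ξ‖ ^ 2) + 2 * Real.exp (-t) := by
      simp only [Real.norm_eq_abs, hc, abs_le]
      refine ⟨?_, ?_⟩
      all_goals nlinarith [Real.exp_pos (-t), hexp_pos]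
    have h1 : ‖c ξ • L‖ ≤ 2 * t * Real.exp (-t * ‖ξ‖ ^ 2) + 2 * Real.exp (-t) := by
      refine (ContinuousLinearMap.opNorm_smul_le _ _).trans ?_
      calc ‖c ξ‖ * ‖L‖ ≤ (2 * t * Real.exp (-t * ‖ξ‖ ^ 2) + 2 * Real.exp (-t)) * 1 :=
            mul_le_mul hcabs hLnorm (ContinuousLinearMap.opNorm_nonneg _) (by positivity)
        _ = _ := mul_one _
    have hc'norm : ‖c'‖ ≤ 4 * t ^ 2 * Real.exp (-t * ‖ξ‖ ^ 2) * ‖ξ‖ := by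
      rw [hc']
      refine (ContinuousLinearMap.opNorm_smul_le _ _).trans ?_
      rw [hLξ, Real.norm_eq_abs, abs_of_nonneg (by positivity)]
    have h2 : ‖c'.smulRight (L ξ)‖ ≤ 4 * t ^ 2 * Real.exp (-t * ‖ξ‖ ^ 2) * ‖ξ‖ ^ 2 := by
      rw [ContinuousLinearMap.norm_smulRight_apply, hLξ]
      calc ‖c'‖ * ‖ξ‖ ≤ (4 * t ^ 2 * Real.exp (-t * ‖ξ‖ ^ 2) * ‖ξ‖) * ‖ξ‖ :=
            mul_le_mul_of_nonneg_right hc'norm (norm_nonneg _)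
        _ = _ := by ring
    calc ‖c ξ • L + c'.smulRight (L ξ)‖
        ≤ ‖c ξ • L‖ + ‖c'.smulRight (L ξ)‖ := ContinuousLinearMap.opNorm_add_le _ _
      _ ≤ _ := add_le_add h1 h2
  -- final arithmetic
  have hq14 : ‖ξ‖ ^ 2 ≤ 1 / 4 := by nlinarith [norm_nonneg ξ]
  have hA : Real.exp (-t * ‖ξ‖ ^ 2) ≤ 2 * Real.exp (-(1 + t) * ‖ξ‖ ^ 2) := by
    have : Real.exp (-t * ‖ξ‖ ^ 2) = Real.exp (‖ξ‖ ^ 2) * Real.exp (-(1 + t) * ‖ξ‖ ^ 2) := by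
      rw [← Real.exp_add]; ring_nf
    rw [this]
    have h2' : Real.exp (‖ξ‖ ^ 2) ≤ 2 := by
      have e1 : Real.exp (1/2) * Real.exp (1/2) = Real.exp 1 := by
        rw [← Real.exp_add]; norm_num
      have e2 : Real.exp (1/4) * Real.exp (1/4) = Real.exp (1/2) := by
        rw [← Real.exp_add]; norm_num
      have hd9 : Real.exp 1 < 2.7182818286 := Real.exp_one_lt_d9
      have p2 : (0:ℝ) < Real.exp (1/2) := Real.exp_pos _
      have p4 : (0:ℝ) < Real.exp (1/4) := Real.exp_pos _
      have hhalf : Real.exp (1/2) < 2 := by nlinarith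
      have hquart : Real.exp (1/4) ≤ 2 := by nlinarith
      exact (Real.exp_le_exp.2 hq14).trans hquart
    nlinarith [Real.exp_pos (-(1 + t) * ‖ξ‖ ^ 2)]
  have hB : Real.exp (-t) ≤ Real.exp (-t * ‖ξ‖ ^ 2) := by
    apply Real.exp_le_exp.2; nlinarith
  calc ‖c ξ • L + c'.smulRight (L ξ)‖ ≤ 2 * t * Real.exp (-t * ‖ξ‖ ^ 2) + 2 * Real.exp (-t)
      + 4 * t ^ 2 * Real.exp (-t * ‖ξ‖ ^ 2) * ‖ξ‖ ^ 2 := hbound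
    _ ≤ (2 + 2 * t + 4 * t ^ 2 * ‖ξ‖ ^ 2) * Real.exp (-t * ‖ξ‖ ^ 2) := by nlinarith
    _ ≤ (2 + 2 * t + 4 * t ^ 2 * ‖ξ‖ ^ 2) * (2 * Real.exp (-(1 + t) * ‖ξ‖ ^ 2)) := by
        apply mul_le_mul_of_nonneg_left hA; nlinarith
    _ ≤ 8 * Real.exp (-(1 + t) * ‖ξ‖ ^ 2) * (1 + t + t ^ 2 * ‖ξ‖ ^ 2) := by
        nlinarith [Real.exp_pos (-(1 + t) * ‖ξ‖ ^ 2)]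

theorem stmt5 (n : ℕ) (hn : 1 ≤ n) :
    ∃ C > 0, ∀ ξ : EuclideanSpace ℝ (Fin n), ‖ξ‖ ≤ 1 / 2 → ∀ t : ℝ, 0 ≤ t →
      ‖iteratedFDeriv ℝ 2 (fun η : EuclideanSpace ℝ (Fin n) =>
          Real.exp (-t * ‖η‖ ^ 2) - Real.exp (-t) * ‖η‖ ^ 2) ξ‖
        ≤ C * Real.exp (-(1 + t) * ‖ξ‖ ^ 2) * (1 + t + t ^ 2 * ‖ξ‖ ^ 2) :=
  ⟨8, by norm_num, fun ξ hξ t ht => stmt5_aux ξ hξ t ht⟩
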